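/- The interval [0,1] admits continuous transport: for every pair of fully supported diffuse Borel probability measures μ, ν on [0,1], there exists a homeomorphism h of [0,1] with h_*ν = μ and sup_{x∈[0,1]} |h(x) − x| ≤ δ(μ,ν). -/

import Mathlib

open MeasureTheory
open scoped unitInterval

/-- The optimal matching distance between two Borel measures. -/
noncomputable def matchDist {X : Type*} [PseudoMetricSpace X] [MeasurableSpace X]
    (μ ν : Measure X) : ℝ :=
  sInf {r : ℝ | ∀ U : Set X, MeasurableSet U →
    μ U ≤ ν (Metric.thickening r U) ∧ ν U ≤ μ (Metric.thickening r U)}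


noncomputable def cdfR (μ : Measure I) (x : I) : ℝ := (μ (Set.Iic x)).toReal

lemma measure_Iic_eq (μ : Measure I) [IsProbabilityMeasure μ] (x : I) :
    μ (Set.Iic x) = ENNReal.ofReal (cdfR μ x) :=
  (ENNReal.ofReal_toReal (measure_ne_top μ _)).symm

lemma cdfR_one (μ : Measure I) [IsProbabilityMeasure μ] : cdfR μ 1 = 1 := by
  have : Set.Iic (1 : I) = Set.univ := by
    ext z; simp; exact unitInterval.le_one z
  rw [cdfR, this, measure_univ, ENNReal.toReal_one]

lemma cdfR_surj (μ : Measure I) [IsProbabilityMeasure μ] (hd : ∀ x : I, μ {x} = 0)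
    (t : I) : ∃ x : I, cdfR μ x = (t : ℝ) := by
  set S : Set ℝ := {a | ∃ ha : a ∈ Set.Icc (0:ℝ) 1, (t:ℝ) ≤ cdfR μ ⟨a, ha⟩} with hS
  have h1S : (1:ℝ) ∈ S := by
    refine ⟨⟨by norm_num, by norm_num⟩, ?_⟩
    have h : (⟨1, by norm_num, by norm_num⟩ : I) = 1 := rfl
    rw [h, cdfR_one]; exact t.2.2
  have hne : S.Nonempty := ⟨1, h1S⟩
  have hbdd : BddBelow S := ⟨0, fun b hb => hb.1.1⟩
  set a : ℝ := sInf S with haa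
  have ha0 : 0 ≤ a := le_csInf hne (fun b hb => hb.1.1)
  have ha1 : a ≤ 1 := csInf_le hbdd h1S
  set x : I := ⟨a, ha0, ha1⟩ with hx
  -- upper bound of t by measure
  have hA : ENNReal.ofReal (t:ℝ) ≤ μ (Set.Iic x) := by
    obtain ⟨u, hanti, hlim, hmem⟩ := exists_seq_tendsto_sInf hne hbdd
    set y : ℕ → I := fun n => ⟨u n, (hmem n).choose.1, (hmem n).choose.2⟩ with hy
    have hIic : Set.Iic x = ⋂ n, Set.Iic (y n) := by
      ext z
      simp only [Set.mem_iInter, Set.mem_Iic]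
      constructor
      · intro hz n
        have : a ≤ u n := csInf_le hbdd (hmem n)
        exact le_trans hz (by exact_mod_cast this)
      · intro hz
        have : (z:ℝ) ≤ a := ge_of_tendsto hlim (Filter.Eventually.of_forall fun n => hz n)
        exact this
    have htend : Filter.Tendsto (fun n => μ (Set.Iic (y n))) Filter.atTop
        (nhds (μ (⋂ n, Set.Iic (y n)))) := by
      refine MeasureTheory.tendsto_measure_iInter_atTop
        (fun n => (measurableSet_Iic).nullMeasurableSet) ?_ ⟨0, measure_ne_top μ _⟩
      intro m n hmn z hz
      exact le_trans hz (by exact_mod_cast hanti hmn)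
    rw [hIic]
    refine ge_of_tendsto htend (Filter.Eventually.of_forall fun n => ?_)
    have := (hmem n).choose_spec
    rw [measure_Iic_eq]
    exact ENNReal.ofReal_le_ofReal this
  -- lower bound
  have hB : μ (Set.Iic x) ≤ ENNReal.ofReal (t:ℝ) := by
    rcases eq_or_lt_of_le ha0 with h0 | h0
    · have hx0 : Set.Iic x ⊆ {x} := by
        intro z hz
        have hz0 : (z:ℝ) ≤ a := hz
        have : (z:ℝ) = a := le_antisymm hz0 (by rw [← h0]; exact z.2.1)
        exact Set.mem_singleton_iff.mpr (Subtype.ext this)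
      calc μ (Set.Iic x) ≤ μ {x} := measure_mono hx0
        _ = 0 := hd x
        _ ≤ _ := zero_le
    · obtain ⟨v, hvmono, hvlt, hvlim⟩ := exists_seq_strictMono_tendsto a
      set w : ℕ → ℝ := fun n => max (v n) 0 with hw
      have hwlt : ∀ n, w n < a := fun n => max_lt (hvlt n) h0
      have hwmem : ∀ n, w n ∈ Set.Icc (0:ℝ) 1 :=
        fun n => ⟨le_max_right _ _, le_trans (hwlt n).le ha1⟩
      set y : ℕ → I := fun n => ⟨w n, hwmem n⟩ with hy
      have hyS : ∀ n, cdfR μ (y n) < (t:ℝ) := by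
        intro n
        by_contra hcon
        push_neg at hcon
        have : a ≤ w n := csInf_le hbdd ⟨hwmem n, hcon⟩
        exact absurd (hwlt n) (not_lt.mpr this)
      have hIio : Set.Iio x = ⋃ n, Set.Iic (y n) := by
        ext z
        simp only [Set.mem_iUnion, Set.mem_Iic, Set.mem_Iio]
        constructor
        · intro hz
          have hz' : (z:ℝ) < a := hz
          obtain ⟨n, hn⟩ := (hvlim.eventually (eventually_gt_nhds hz')).exists
          exact ⟨n, show (z:ℝ) ≤ w n from le_trans hn.le (le_max_left _ _)⟩
        · rintro ⟨n, hn⟩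
          exact show (z:ℝ) < a from lt_of_le_of_lt (show (z:ℝ) ≤ w n from hn) (hwlt n)
      have hmono : Monotone fun n => Set.Iic (y n) := by
        intro m n hmn z hz
        exact le_trans hz (show (w m : ℝ) ≤ w n from max_le_max (hvmono.monotone hmn) le_rfl)
      have htend : Filter.Tendsto (fun n => μ (Set.Iic (y n))) Filter.atTop
          (nhds (μ (⋃ n, Set.Iic (y n)))) := MeasureTheory.tendsto_measure_iUnion_atTop hmono
      have hIio_le : μ (Set.Iio x) ≤ ENNReal.ofReal (t:ℝ) := by
        rw [hIio]
        refine le_of_tendsto htend (Filter.Eventually.of_forall fun n => ?_)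
        rw [measure_Iic_eq]
        exact ENNReal.ofReal_le_ofReal (hyS n).le
      have : Set.Iic x = insert x (Set.Iio x) := (Set.Iio_insert (a := x)).symm
      rw [this]
      calc μ (insert x (Set.Iio x)) ≤ μ {x} + μ (Set.Iio x) := by
            rw [← Set.singleton_union]; exact measure_union_le _ _
        _ = μ (Set.Iio x) := by rw [hd x, zero_add]
        _ ≤ _ := hIio_le
  refine ⟨x, ?_⟩
  have := le_antisymm hB hA
  rw [measure_Iic_eq] at this
  have h2 := congrArg ENNReal.toReal this
  rwa [ENNReal.toReal_ofReal (by exact ENNReal.toReal_nonneg), ENNReal.toReal_ofReal t.2.1] at h2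

lemma cdfR_le_one (μ : Measure I) [IsProbabilityMeasure μ] (x : I) : cdfR μ x ≤ 1 := by
  rw [cdfR, ← ENNReal.toReal_one]
  exact ENNReal.toReal_mono ENNReal.one_ne_top prob_le_one

noncomputable def cdfI (μ : Measure I) [IsProbabilityMeasure μ] (x : I) : I :=
  ⟨cdfR μ x, ENNReal.toReal_nonneg, cdfR_le_one μ x⟩

lemma cdfI_strictMono (μ : Measure I) [IsProbabilityMeasure μ]
    (hfull : ∀ U : Set I, IsOpen U → U.Nonempty → 0 < μ U) : StrictMono (cdfI μ) := by
  intro x y hxy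
  simp only [cdfI, Subtype.mk_lt_mk, cdfR]
  rw [ENNReal.toReal_lt_toReal (measure_ne_top μ _) (measure_ne_top μ _)]
  have hsub : Set.Iic x ∪ Set.Ioo x y ⊆ Set.Iic y := by
    rintro z (hz | hz)
    · exact le_trans hz hxy.le
    · exact hz.2.le
  have hdisj : Disjoint (Set.Iic x) (Set.Ioo x y) := by
    rw [Set.disjoint_left]
    rintro z hz ⟨h1, _⟩
    exact absurd hz (not_le.mpr h1)
  have hpos : 0 < μ (Set.Ioo x y) := by
    obtain ⟨z, hz⟩ := exists_between hxy
    exact hfull _ isOpen_Ioo ⟨z, hz⟩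
  calc μ (Set.Iic x) < μ (Set.Iic x) + μ (Set.Ioo x y) :=
        ENNReal.lt_add_right (measure_ne_top μ _) hpos.ne'
    _ = μ (Set.Iic x ∪ Set.Ioo x y) := (measure_union hdisj measurableSet_Ioo).symm
    _ ≤ μ (Set.Iic y) := measure_mono hsub

/-- Key estimate for the distance bound. -/
lemma key_le (μ' ν' : Measure I) [IsProbabilityMeasure μ'] [IsProbabilityMeasure ν']
    (hSM : StrictMono (cdfR μ')) {r : ℝ} (hr : 0 < r)
    (H : ∀ U : Set I, MeasurableSet U → ν' U ≤ μ' (Metric.thickening r U))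
    (x y : I) (hxy : cdfR ν' x = cdfR μ' y) : (y:ℝ) ≤ (x:ℝ) + r := by
  by_contra hcon
  push_neg at hcon
  set z : ℝ := ((x:ℝ) + r + (y:ℝ)) / 2 with hz
  have hz1 : (x:ℝ) + r < z := by simp only [hz]; linarith
  have hz2 : z < (y:ℝ) := by simp only [hz]; linarith
  have hz0 : 0 ≤ z := by have := x.2.1; linarith
  have hz1' : z ≤ 1 := le_trans hz2.le y.2.2
  set z' : I := ⟨z, hz0, hz1'⟩ with hz'
  have hz'y : z' < y := hz2
  have hthick : Metric.thickening r (Set.Iic x) ⊆ Set.Iic z' := by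
    intro w hw
    rw [Metric.mem_thickening_iff] at hw
    obtain ⟨u, hu, hdu⟩ := hw
    have hdu' : |(w:ℝ) - (u:ℝ)| < r := by
      rwa [Subtype.dist_eq, Real.dist_eq] at hdu
    have : (w:ℝ) < (u:ℝ) + r := by
      have := abs_lt.mp hdu'
      linarith [this.1, this.2]
    have hul : (u:ℝ) ≤ (x:ℝ) := hu
    show (w:ℝ) ≤ z
    linarith
  have hchain : ν' (Set.Iic x) ≤ μ' (Set.Iic z') :=
    le_trans (H _ measurableSet_Iic) (measure_mono hthick)
  rw [measure_Iic_eq, measure_Iic_eq, hxy] at hchain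
  have hlt : cdfR μ' z' < cdfR μ' y := hSM hz'y
  have : ENNReal.ofReal (cdfR μ' z') < ENNReal.ofReal (cdfR μ' y) :=
    (ENNReal.ofReal_lt_ofReal_iff (lt_of_le_of_lt ENNReal.toReal_nonneg hlt)).mpr hlt
  exact absurd hchain (not_le.mpr this)

lemma map_cdfI (μ : Measure I) [IsProbabilityMeasure μ] (e : I ≃o I) (he : ⇑e = cdfI μ)
    (t : I) : Measure.map (⇑e.toHomeomorph) μ (Set.Iic t) = ENNReal.ofReal (t:ℝ) := by
  rw [Measure.map_apply e.toHomeomorph.continuous.measurable measurableSet_Iic]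
  have hpre : ⇑e.toHomeomorph ⁻¹' Set.Iic t = Set.Iic (e.symm t) := by
    ext w
    simp only [Set.mem_preimage, Set.mem_Iic, OrderIso.coe_toHomeomorph]
    exact ⟨fun hw => (OrderIso.le_symm_apply e).mpr hw, fun hw => (OrderIso.le_symm_apply e).mp hw⟩
  rw [hpre, measure_Iic_eq]
  congr 1
  have : e (e.symm t) = cdfI μ (e.symm t) := by rw [he]
  rw [OrderIso.apply_symm_apply] at this
  exact congrArg Subtype.val this.symm

/-- The interval `[0,1]` admits continuous transport: for fully supported diffuse Borel
probability measures `μ, ν` on `[0,1]` there is a homeomorphism `h` of `[0,1]` with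
`h⁎ν = μ` and `sup_x |h(x) − x| ≤ δ(μ,ν)`. -/
theorem stmt5 (μ ν : Measure I) [IsProbabilityMeasure μ] [IsProbabilityMeasure ν]
    (hdiffμ : ∀ x : I, μ {x} = 0) (hdiffν : ∀ x : I, ν {x} = 0)
    (hfullμ : ∀ U : Set I, IsOpen U → U.Nonempty → 0 < μ U)
    (hfullν : ∀ U : Set I, IsOpen U → U.Nonempty → 0 < ν U) :
    ∃ h : I ≃ₜ I, Measure.map h ν = μ ∧ ∀ x : I, dist (h x) x ≤ matchDist μ ν := by
  have hsmμ := cdfI_strictMono μ hfullμ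
  have hsmν := cdfI_strictMono ν hfullν
  have hsurjμ : Function.Surjective (cdfI μ) := fun t => by
    obtain ⟨x, hx⟩ := cdfR_surj μ hdiffμ t
    exact ⟨x, Subtype.ext hx⟩
  have hsurjν : Function.Surjective (cdfI ν) := fun t => by
    obtain ⟨x, hx⟩ := cdfR_surj ν hdiffν t
    exact ⟨x, Subtype.ext hx⟩
  set eμ : I ≃o I := StrictMono.orderIsoOfSurjective _ hsmμ hsurjμ with heμdef
  set eν : I ≃o I := StrictMono.orderIsoOfSurjective _ hsmν hsurjν with heνdef
  have heμ : ⇑eμ = cdfI μ := rfl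
  have heν : ⇑eν = cdfI ν := rfl
  set h : I ≃ₜ I := (eν.toHomeomorph).trans (eμ.toHomeomorph).symm with hhdef
  have hmapν : IsProbabilityMeasure (Measure.map (⇑eν.toHomeomorph) ν) :=
    Measure.isProbabilityMeasure_map eν.toHomeomorph.continuous.measurable.aemeasurable
  have hmaps : Measure.map (⇑eν.toHomeomorph) ν = Measure.map (⇑eμ.toHomeomorph) μ := by
    refine Measure.ext_of_Iic _ _ (fun t => ?_)
    rw [map_cdfI ν eν heν t, map_cdfI μ eμ heμ t]
  have hcoe : ⇑h = ⇑(eμ.toHomeomorph).symm ∘ ⇑eν.toHomeomorph := rfl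
  have hpush : Measure.map (⇑h) ν = μ := by
    rw [hcoe, ← Measure.map_map (eμ.toHomeomorph).symm.continuous.measurable
      eν.toHomeomorph.continuous.measurable, hmaps,
      Measure.map_map (eμ.toHomeomorph).symm.continuous.measurable
      eμ.toHomeomorph.continuous.measurable]
    have : ⇑(eμ.toHomeomorph).symm ∘ ⇑eμ.toHomeomorph = id := by
      funext w
      simp
    rw [this, Measure.map_id]
  refine ⟨h, hpush, fun x => ?_⟩
  -- nonemptiness of the matching set
  have h2mem : (2:ℝ) ∈ {r : ℝ | ∀ U : Set I, MeasurableSet U →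
      μ U ≤ ν (Metric.thickening r U) ∧ ν U ≤ μ (Metric.thickening r U)} := by
    intro U hU
    rcases U.eq_empty_or_nonempty with rfl | ⟨u, hu⟩
    · simp
    · have huniv : Metric.thickening 2 U = Set.univ := by
        refine Set.eq_univ_of_forall (fun w => ?_)
        rw [Metric.mem_thickening_iff]
        refine ⟨u, hu, ?_⟩
        rw [Subtype.dist_eq, Real.dist_eq]
        have h1 := w.2.1; have h2 := w.2.2; have h3 := u.2.1; have h4 := u.2.2
        rw [abs_lt]; constructor <;> linarith
      rw [huniv]
      constructor
      · calc μ U ≤ μ Set.univ := measure_mono (Set.subset_univ U)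
          _ = 1 := measure_univ
          _ = ν Set.univ := measure_univ.symm
      · calc ν U ≤ ν Set.univ := measure_mono (Set.subset_univ U)
          _ = 1 := measure_univ
          _ = μ Set.univ := measure_univ.symm
  refine le_csInf ⟨2, h2mem⟩ (fun r hr => ?_)
  -- r is positive
  have hr0 : 0 < r := by
    by_contra hneg
    push_neg at hneg
    have := (hr Set.univ MeasurableSet.univ).1
    rw [Metric.thickening_of_nonpos hneg, measure_empty, measure_univ] at this
    exact absurd this (by simp)
  set y : I := h x with hy
  have hxy : cdfR ν x = cdfR μ y := by
    have h1 : eμ y = eν x := by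
      show eμ ((eμ.toHomeomorph).symm (eν.toHomeomorph x)) = eν x
      have := (eμ.toHomeomorph).apply_symm_apply (eν.toHomeomorph x)
      exact this
    have h2 : cdfI μ y = cdfI ν x := by rw [← heμ, ← heν, h1]
    exact (congrArg Subtype.val h2).symm
  have hsmRμ : StrictMono (cdfR μ) := fun a b hab => hsmμ hab
  have hsmRν : StrictMono (cdfR ν) := fun a b hab => hsmν hab
  have hb1 : (y:ℝ) ≤ (x:ℝ) + r :=
    key_le μ ν hsmRμ hr0 (fun U hU => (hr U hU).2) x y hxy
  have hb2 : (x:ℝ) ≤ (y:ℝ) + r :=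
    key_le ν μ hsmRν hr0 (fun U hU => (hr U hU).1) y x hxy.symm
  rw [Subtype.dist_eq, Real.dist_eq, abs_le]
  constructor <;> linarith
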